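/- Let G be a graph of the following form: H is a triangle-free graph with chromatic number greater than 4, v is a new vertex adjacent exactly to A ⊆ V(H), and G is obtained from H plus v by switching (toggling adjacency of) all pairs {x,y} with x ∈ A and y ∈ V(H)\A. Then the link of v in the cocycle co(G) is isomorphic to H. -/

import Mathlib

open Finset

/-- The number of edges of the graph `H` inside the vertex set `T`. -/
def edgeCount {V : Type*} [DecidableEq V] (H : SimpleGraph V) [DecidableRel H.Adj]
    (T : Finset V) : ℕ :=
  ((T.powersetCard 2).filter fun P => ∀ x ∈ P, ∀ y ∈ P, x ≠ y → H.Adj x y).card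

/-- `T` is an edge of the 3-uniform hypergraph `co(H)`. -/
def coEdge {V : Type*} [DecidableEq V] (H : SimpleGraph V) [DecidableRel H.Adj]
    (T : Finset V) : Prop :=
  T.card = 3 ∧ Odd (edgeCount H T)

/-- The graph obtained from `H` by adding a new vertex `none` adjacent exactly to `A`,
and switching (toggling) the adjacency of all pairs `{x,y}` with `x ∈ A`, `y ∉ A`. -/
def switched {W : Type*} (H : SimpleGraph W) (A : Set W) : SimpleGraph (Option W) where
  Adj x y :=
    match x, y with
    | none, none => False
    | none, some b => b ∈ A
    | some a, none => a ∈ A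
    | some a, some b =>
        ((a ∈ A ↔ b ∈ A) ∧ H.Adj a b) ∨ (¬(a ∈ A ↔ b ∈ A) ∧ ¬H.Adj a b ∧ a ≠ b)
  symm := by
    constructor
    intro x y h
    cases x <;> cases y <;> simp_all [SimpleGraph.adj_comm] <;> tauto
  loopless := by
    constructor
    intro x h
    cases x <;> simp_all

instance {W : Type*} [DecidableEq W] (H : SimpleGraph W) [DecidableRel H.Adj] (A : Set W)
    [DecidablePred (· ∈ A)] : DecidableRel (switched H A).Adj := fun x y =>
  match x, y with
  | none, none => inferInstanceAs (Decidable False)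
  | none, some b => inferInstanceAs (Decidable (b ∈ A))
  | some a, none => inferInstanceAs (Decidable (a ∈ A))
  | some a, some b => inferInstanceAs (Decidable (((a ∈ A ↔ b ∈ A) ∧ H.Adj a b) ∨
      (¬(a ∈ A ↔ b ∈ A) ∧ ¬H.Adj a b ∧ a ≠ b)))

/-- Let `H` be a triangle-free graph with chromatic number greater than 4, let `v` be a
new vertex adjacent exactly to `A ⊆ V(H)`, and let `G` be obtained by switching all
pairs between `A` and `V(H) \ A`. Then the link of `v` in the cocycle `co(G)` is
(isomorphic to) `H`: for distinct `x, y ∈ V(H)`, the triple `{v, x, y}` is an edge of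
`co(G)` iff `xy` is an edge of `H`. -/

lemma pc2 {V : Type*} [DecidableEq V] (a b c : V) (hab : a ≠ b) (hac : a ≠ c) (hbc : b ≠ c) :
    ({a, b, c} : Finset V).powersetCard 2 = {{a,b},{a,c},{b,c}} := by
  ext P
  simp only [mem_powersetCard, Finset.card_eq_two, mem_insert, mem_singleton]
  constructor
  · rintro ⟨hsub, u, v, huv, rfl⟩
    have hu := hsub (by simp : u ∈ ({u,v} : Finset V))
    have hv := hsub (by simp : v ∈ ({u,v} : Finset V))
    simp only [mem_insert, mem_singleton] at hu hv
    rcases hu with rfl|rfl|rfl <;> rcases hv with rfl|rfl|rfl <;>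
      simp_all [Finset.pair_comm]
  · rintro (rfl|rfl|rfl)
    · exact ⟨by intro z hz; simp at hz; rcases hz with rfl|rfl <;> simp, a, b, hab, rfl⟩
    · exact ⟨by intro z hz; simp at hz; rcases hz with rfl|rfl <;> simp, a, c, hac, rfl⟩
    · exact ⟨by intro z hz; simp at hz; rcases hz with rfl|rfl <;> simp, b, c, hbc, rfl⟩

lemma adjPair {V : Type*} [DecidableEq V] (G : SimpleGraph V) (u v : V) (huv : u ≠ v) :
    (∀ x ∈ ({u,v} : Finset V), ∀ y ∈ ({u,v} : Finset V), x ≠ y → G.Adj x y) ↔ G.Adj u v := by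
  constructor
  · intro h; exact h u (by simp) v (by simp) huv
  · intro h x hx y hy hxy
    simp only [mem_insert, mem_singleton] at hx hy
    rcases hx with rfl|rfl <;> rcases hy with rfl|rfl <;>
      first | exact h | exact h.symm | exact absurd rfl hxy

lemma edgeCount_triple {V : Type*} [DecidableEq V] (G : SimpleGraph V) [DecidableRel G.Adj]
    (a b c : V) (hab : a ≠ b) (hac : a ≠ c) (hbc : b ≠ c) :
    edgeCount G {a, b, c} =
      (if G.Adj a b then 1 else 0) + (if G.Adj a c then 1 else 0) +
        (if G.Adj b c then 1 else 0) := by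
  have hne1 : ({a,b} : Finset V) ≠ {a,c} := by
    intro h
    have hm : b ∈ ({a,c} : Finset V) := by rw [← h]; simp
    simp only [mem_insert, mem_singleton] at hm
    rcases hm with h1|h1
    · exact hab h1.symm
    · exact hbc h1
  have hne2 : ({a,b} : Finset V) ≠ {b,c} := by
    intro h
    have hm : a ∈ ({b,c} : Finset V) := by rw [← h]; simp
    simp only [mem_insert, mem_singleton] at hm
    rcases hm with h1|h1
    · exact hab h1
    · exact hac h1
  have hne3 : ({a,c} : Finset V) ≠ {b,c} := by
    intro h
    have hm : a ∈ ({b,c} : Finset V) := by rw [← h]; simp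
    simp only [mem_insert, mem_singleton] at hm
    rcases hm with h1|h1
    · exact hab h1
    · exact hac h1
  rw [edgeCount, pc2 a b c hab hac hbc]
  rw [show ({{a,b},{a,c},{b,c}} : Finset (Finset V)) =
        insert {a,b} (insert {a,c} {{b,c}}) from rfl]
  rw [Finset.filter_insert, Finset.filter_insert, Finset.filter_singleton]
  simp only [adjPair G a b hab, adjPair G a c hac, adjPair G b c hbc]
  split_ifs <;>
    simp_all [Finset.card_insert_of_notMem, hne1, hne2, hne3]

theorem stmt11 {W : Type*} [Fintype W] [DecidableEq W]
    (H : SimpleGraph W) [DecidableRel H.Adj] (A : Set W) [DecidablePred (· ∈ A)]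
    (htf : H.CliqueFree 3) (hchrom : 4 < H.chromaticNumber) :
    ∀ x y : W, x ≠ y →
      (coEdge (switched H A) {none, some x, some y} ↔ H.Adj x y) := by
  intro x y hxy
  have h1 : (none : Option W) ≠ some x := by simp
  have h2 : (none : Option W) ≠ some y := by simp
  have h3 : (some x : Option W) ≠ some y := by simpa using hxy
  have hcard : ({none, some x, some y} : Finset (Option W)).card = 3 := by
    rw [Finset.card_insert_of_notMem (by simp [hxy]),
        Finset.card_insert_of_notMem (by simpa using hxy), Finset.card_singleton]
  have hec := edgeCount_triple (switched H A) none (some x) (some y) h1 h2 h3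
  constructor
  · rintro ⟨-, hodd⟩
    rw [hec] at hodd
    by_contra hadj
    have hxA : Decidable (x ∈ A) := inferInstance
    by_cases hx : x ∈ A <;> by_cases hy : y ∈ A <;>
      simp_all [switched, coEdge, Nat.odd_iff, hxy] <;> omega
  · intro hadj
    refine ⟨hcard, ?_⟩
    rw [hec]
    by_cases hx : x ∈ A <;> by_cases hy : y ∈ A <;>
      simp_all [switched, Nat.odd_iff] <;> omega
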